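/- Let H solve H³H' = (6/G)(2H* − H) with H(0) = H₀ > 2H* and H > 0 on its maximal interval. Then H(ξ) > 2H* and H'(ξ) < 0 for all ξ in the maximal interval, and H satisfies the a priori bound H(ξ)³ ≤ H₀³ + (18/G)|ξ| for ξ < 0. -/

import Mathlib

open Set

/-- For H₀ > 2H*, the positive solution of H³H' = (6/G)(2H* − H) stays above
2H*, is strictly decreasing, and satisfies H³ ≤ H₀³ + (18/G)|ξ| for ξ < 0. -/
theorem stmt_11 (G Hstar H₀ ξα ξω : ℝ) (hG : 0 < G) (hHstar : 0 < Hstar)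
    (hH₀ : 2 * Hstar < H₀) (hξα : 0 < ξα) (hξω : 0 < ξω)
    (H : ℝ → ℝ)
    (hHpos : ∀ ξ ∈ Ioo (-ξα) ξω, 0 < H ξ)
    (hode : ∀ ξ ∈ Ioo (-ξα) ξω,
      HasDerivAt H (6 * (2 * Hstar - H ξ) / (G * (H ξ)^3)) ξ)
    (hinit : H 0 = H₀) :
    (∀ ξ ∈ Ioo (-ξα) ξω, 2 * Hstar < H ξ ∧ deriv H ξ < 0) ∧
      (∀ ξ ∈ Ioo (-ξα) ξω, ξ < 0 → (H ξ)^3 ≤ H₀^3 + 18 / G * |ξ|) := by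
  have h0I : (0:ℝ) ∈ Ioo (-ξα) ξω := ⟨by linarith, hξω⟩
  have hH0gt : 2 * Hstar < H 0 := by rw [hinit]; exact hH₀
  have hdiff : ∀ ξ ∈ Ioo (-ξα) ξω, DifferentiableAt ℝ H ξ :=
    fun ξ hξ => (hode ξ hξ).differentiableAt
  -- Main claim : H stays above 2 * Hstar
  have key : ∀ ξ ∈ Ioo (-ξα) ξω, 2 * Hstar < H ξ := by
    by_contra hcon
    push_neg at hcon
    obtain ⟨b, hbI, hb⟩ := hcon
    have hbne : b ≠ 0 := by
      intro h; rw [h] at hb; linarith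
    rcases hbne.lt_or_gt with hneg | hpos
    · -- left case : b < 0
      have hIccI : Icc b 0 ⊆ Ioo (-ξα) ξω :=
        fun x hx => ⟨lt_of_lt_of_le hbI.1 hx.1, lt_of_le_of_lt hx.2 hξω⟩
      set S : Set ℝ := Icc b 0 ∩ {ξ | H ξ ≤ 2 * Hstar} with hS
      have hSclosed : IsClosed S := by
        have : S = Icc b 0 ∩ H ⁻¹' (Iic (2*Hstar)) := rfl
        rw [this]
        exact ContinuousOn.preimage_isClosed_of_isClosed
          (fun x hx => (hdiff x (hIccI hx)).continuousAt.continuousWithinAt)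
          isClosed_Icc isClosed_Iic
      have hSne : S.Nonempty := ⟨b, ⟨le_refl b, hneg.le⟩, hb⟩
      have hbdd : BddAbove S := ⟨0, fun x hx => hx.1.2⟩
      have hξ₁S : sSup S ∈ S := hSclosed.csSup_mem hSne hbdd
      set ξ₁ := sSup S with hxi
      have hξ₁lt0 : ξ₁ < 0 := by
        rcases lt_or_eq_of_le hξ₁S.1.2 with h | h
        · exact h
        · exfalso; have := hξ₁S.2; rw [h] at this; exact absurd this (not_le.2 hH0gt)
      have hsubI : Icc ξ₁ 0 ⊆ Ioo (-ξα) ξω :=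
        fun x hx => hIccI ⟨le_trans hξ₁S.1.1 hx.1, hx.2⟩
      have hgt : ∀ x ∈ Ioo ξ₁ 0, 2 * Hstar < H x := by
        intro x hx
        by_contra hle
        push_neg at hle
        have hxS : x ∈ S := ⟨⟨le_trans hξ₁S.1.1 hx.1.le, hx.2.le⟩, hle⟩
        exact absurd (le_csSup hbdd hxS) (not_le.2 hx.1)
      have hmono : AntitoneOn H (Icc ξ₁ 0) := by
        apply antitoneOn_of_deriv_nonpos (convex_Icc ξ₁ 0)
        · exact fun x hx => (hdiff x (hsubI hx)).continuousAt.continuousWithinAt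
        · rw [interior_Icc]
          exact fun x hx =>
            (hdiff x (hsubI (Ioo_subset_Icc_self hx))).differentiableWithinAt
        · rw [interior_Icc]
          intro x hx
          have hxI := hsubI (Ioo_subset_Icc_self hx)
          rw [(hode x hxI).deriv]
          have hapos : 0 < H x := hHpos x hxI
          apply div_nonpos_of_nonpos_of_nonneg
          · nlinarith [hgt x hx]
          · positivity
      have := hmono (left_mem_Icc.2 hξ₁lt0.le) (right_mem_Icc.2 hξ₁lt0.le) hξ₁lt0.le
      have h2 : H ξ₁ ≤ 2 * Hstar := hξ₁S.2
      linarith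
    · -- right case : b > 0, Gronwall-type barrier
      have hIccI : Icc 0 b ⊆ Ioo (-ξα) ξω :=
        fun x hx => ⟨lt_of_lt_of_le (by linarith) hx.1, lt_of_le_of_lt hx.2 hbI.2⟩
      set S : Set ℝ := Icc 0 b ∩ {ξ | H ξ ≤ 2 * Hstar} with hS
      have hSclosed : IsClosed S := by
        have : S = Icc 0 b ∩ H ⁻¹' (Iic (2*Hstar)) := rfl
        rw [this]
        exact ContinuousOn.preimage_isClosed_of_isClosed
          (fun x hx => (hdiff x (hIccI hx)).continuousAt.continuousWithinAt)
          isClosed_Icc isClosed_Iic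
      have hSne : S.Nonempty := ⟨b, ⟨hpos.le, le_refl b⟩, hb⟩
      have hbdd : BddBelow S := ⟨0, fun x hx => hx.1.1⟩
      have hξ₁S : sInf S ∈ S := hSclosed.csInf_mem hSne hbdd
      set ξ₁ := sInf S with hxi
      have hξ₁gt0 : 0 < ξ₁ := by
        rcases lt_or_eq_of_le hξ₁S.1.1 with h | h
        · exact h
        · exfalso; have := hξ₁S.2; rw [← h] at this; exact absurd this (not_le.2 hH0gt)
      have hsubI : Icc 0 ξ₁ ⊆ Ioo (-ξα) ξω :=
        fun x hx => hIccI ⟨hx.1, le_trans hx.2 hξ₁S.1.2⟩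
      have hgt : ∀ x ∈ Ioo 0 ξ₁, 2 * Hstar < H x := by
        intro x hx
        by_contra hle
        push_neg at hle
        have hxS : x ∈ S := ⟨⟨hx.1.le, le_trans hx.2.le hξ₁S.1.2⟩, hle⟩
        exact absurd (csInf_le hbdd hxS) (not_le.2 hx.2)
      set C : ℝ := 6 / (G * (2*Hstar)^3) with hC
      set v : ℝ → ℝ := fun x => (H x - 2*Hstar) * Real.exp (C * x) with hv
      have hvderiv : ∀ x ∈ Ioo (-ξα) ξω,
          HasDerivAt v (6 * (2 * Hstar - H x) / (G * (H x)^3) * Real.exp (C*x)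
            + (H x - 2*Hstar) * (Real.exp (C*x) * (C * 1))) x := by
        intro x hxI
        exact ((hode x hxI).sub_const (2*Hstar)).mul
          (((hasDerivAt_id x).const_mul C).exp)
      have hmono : MonotoneOn v (Icc 0 ξ₁) := by
        apply monotoneOn_of_deriv_nonneg (convex_Icc 0 ξ₁)
        · exact fun x hx =>
            (hvderiv x (hsubI hx)).differentiableAt.continuousAt.continuousWithinAt
        · rw [interior_Icc]
          exact fun x hx =>
            (hvderiv x (hsubI (Ioo_subset_Icc_self hx))).differentiableAt.differentiableWithinAt
        · rw [interior_Icc]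
          intro x hx
          have hxI := hsubI (Ioo_subset_Icc_self hx)
          rw [(hvderiv x hxI).deriv]
          have ha : 2 * Hstar < H x := hgt x hx
          have hapos : 0 < H x := hHpos x hxI
          have hepos : 0 < Real.exp (C * x) := Real.exp_pos _
          have hkey : 6 * (2 * Hstar - H x) / (G * (H x)^3)
              + (H x - 2*Hstar) * C ≥ 0 := by
            have h1 : 6 * (H x - 2*Hstar) / (G * (H x)^3)
                ≤ 6 * (H x - 2*Hstar) / (G * (2*Hstar)^3) := by
              have hcube : (2*Hstar)^3 ≤ (H x)^3 :=
                pow_le_pow_left₀ (by positivity) ha.le 3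
              apply div_le_div_of_nonneg_left (by nlinarith) (by positivity) (by nlinarith)
            have h2 : 6 * (H x - 2*Hstar) / (G * (2*Hstar)^3)
                = (H x - 2*Hstar) * C := by
              rw [hC]; field_simp
            have h3 : 6 * (2 * Hstar - H x) / (G * (H x)^3)
                = -(6 * (H x - 2*Hstar) / (G * (H x)^3)) := by ring
            rw [h3]; linarith
          nlinarith [hkey, hepos]
      have hle := hmono (left_mem_Icc.2 hξ₁gt0.le) (right_mem_Icc.2 hξ₁gt0.le) hξ₁gt0.le
      have hv0 : v 0 = H 0 - 2*Hstar := by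
        simp [hv]
      have hv1 : v ξ₁ ≤ 0 :=
        mul_nonpos_of_nonpos_of_nonneg
          (by have h2 : H ξ₁ ≤ 2 * Hstar := hξ₁S.2; linarith) (Real.exp_pos _).le
      rw [hv0] at hle
      linarith
  constructor
  · intro ξ hξ
    refine ⟨key ξ hξ, ?_⟩
    rw [(hode ξ hξ).deriv]
    apply div_neg_of_neg_of_pos
    · nlinarith [key ξ hξ]
    · have := hHpos ξ hξ; positivity
  · intro ξ hξ hξneg
    set g : ℝ → ℝ := fun x => (H x)^3 + 18 / G * x with hg
    have hgderiv : ∀ x ∈ Ioo (-ξα) ξω,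
        HasDerivAt g ((3:ℕ) * (H x)^2 * (6 * (2 * Hstar - H x) / (G * (H x)^3))
          + 18 / G * 1) x := by
      intro x hxI
      have h1 : HasDerivAt (fun y => (H y)^3)
          ((3:ℕ) * (H x)^(3-1) * (6 * (2 * Hstar - H x) / (G * (H x)^3))) x :=
        (hode x hxI).pow 3
      have h2 : HasDerivAt (fun y => 18 / G * y) (18 / G * 1) x :=
        (hasDerivAt_id x).const_mul (18 / G)
      exact (h1.add h2).congr_deriv (by norm_num)
    have hsubI : Icc ξ 0 ⊆ Ioo (-ξα) ξω :=
      fun x hx => ⟨lt_of_lt_of_le hξ.1 hx.1, lt_of_le_of_lt hx.2 hξω⟩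
    have hmono : MonotoneOn g (Icc ξ 0) := by
      apply monotoneOn_of_deriv_nonneg (convex_Icc ξ 0)
      · exact fun x hx =>
          (hgderiv x (hsubI hx)).differentiableAt.continuousAt.continuousWithinAt
      · rw [interior_Icc]
        exact fun x hx =>
          (hgderiv x (hsubI (Ioo_subset_Icc_self hx))).differentiableAt.differentiableWithinAt
      · rw [interior_Icc]
        intro x hx
        have hxI := hsubI (Ioo_subset_Icc_self hx)
        rw [(hgderiv x hxI).deriv]
        have hapos : 0 < H x := hHpos x hxI
        have hane : H x ≠ 0 := ne_of_gt hapos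
        have hGne : G ≠ 0 := ne_of_gt hG
        have heq : (3:ℕ) * (H x)^2 * (6 * (2 * Hstar - H x) / (G * (H x)^3))
            + 18 / G * 1 = 36 * Hstar / (G * H x) := by
          field_simp
          ring
        rw [heq]
        positivity
    have hle := hmono (left_mem_Icc.2 hξneg.le) (right_mem_Icc.2 hξneg.le) hξneg.le
    have hg0 : g 0 = H₀^3 := by simp [hg, hinit]
    rw [hg0] at hle
    rw [abs_of_neg hξneg]
    have : (H ξ)^3 + 18 / G * ξ ≤ H₀^3 := hle
    linarith
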